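/- arXiv:2207.05482 — 2 statements merged into one kernel-verified Lean document; each statement's English description precedes it below -/
import Mathlib

section
/- For all τ ∈ (0,1) and all n̄ with 0 ≤ n̄ ≤ τ, setting n_e := n̄/(1-τ), the thermal-loss capacity bound L(τ,n̄) := -log₂(τ^{n_e}(1-τ)) - h(n_e) satisfies L(τ,n̄) ≤ -log₂(1-τ); that is, the thermal-loss upper bound never exceeds the pure-loss PLOB bound. -/
/-- The entropic function `h(x) = (x+1)log₂(x+1) - x log₂ x` (with `h(0) = 0`,
which holds automatically since `Real.logb 2 0 = 0`). -/
noncomputable def entH (x : ℝ) : ℝ := (x + 1) * Real.logb 2 (x + 1) - x * Real.logb 2 x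

lemma key (τ x : ℝ) (hτ0 : 0 < τ) (hτ1 : τ < 1) (hx0 : 0 ≤ x)
    (hx : x ≤ τ / (1 - τ)) : -(x * Real.logb 2 τ) ≤ entH x := by
  rcases eq_or_lt_of_le hx0 with h0 | hx0'
  · simp [entH, ← h0]
  · have h1τ : 0 < 1 - τ := by linarith
    have hfrac : x / (x + 1) ≤ τ := by
      rw [div_le_iff₀ (by linarith)]
      have := (le_div_iff₀ h1τ).mp hx
      nlinarith
    have hlog : Real.logb 2 (x / (x + 1)) ≤ Real.logb 2 τ :=
      by have hpos : 0 < x / (x + 1) := by positivity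
         gcongr
         norm_num
    have hdiv : Real.logb 2 (x / (x + 1)) = Real.logb 2 x - Real.logb 2 (x + 1) :=
      Real.logb_div (ne_of_gt hx0') (by linarith)
    have h2 : -(x * Real.logb 2 τ) ≤ x * (Real.logb 2 (x + 1) - Real.logb 2 x) := by
      have := mul_le_mul_of_nonneg_left hlog hx0
      rw [hdiv] at this
      linarith
    have h3 : 0 ≤ Real.logb 2 (x + 1) := Real.logb_nonneg one_lt_two (by linarith)
    unfold entH
    nlinarith

/-- for all `τ ∈ (0,1)` and `0 ≤ n̄ ≤ τ`, with `n_e = n̄/(1-τ)`,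
the thermal-loss bound `L(τ,n̄) = -log₂(τ^{n_e}(1-τ)) - h(n_e)` never exceeds the
pure-loss PLOB bound `-log₂(1-τ)`. -/
theorem stmt_3 (τ nbar : ℝ) (hτ0 : 0 < τ) (hτ1 : τ < 1) (hn0 : 0 ≤ nbar) (hn : nbar ≤ τ) :
    -Real.logb 2 (τ ^ (nbar / (1 - τ)) * (1 - τ)) - entH (nbar / (1 - τ))
      ≤ -Real.logb 2 (1 - τ) := by
  have h1τ : 0 < 1 - τ := by linarith
  set x := nbar / (1 - τ) with hxdef
  have hx0 : 0 ≤ x := div_nonneg hn0 h1τ.le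
  have hx : x ≤ τ / (1 - τ) := by rw [hxdef]; gcongr
  have hrw : Real.logb 2 (τ ^ x * (1 - τ)) = x * Real.logb 2 τ + Real.logb 2 (1 - τ) := by
    rw [Real.logb_mul (by positivity) (ne_of_gt h1τ)]
    simp only [Real.logb, Real.log_rpow hτ0]
    ring
  rw [hrw]
  have := key τ x hτ0 hτ1 hx0 hx
  linarith
end

section
/- Let G = (P,E) be a finite k-regular graph and I ⊆ P a nonempty set of target nodes with P ∖ I nonempty. Then removing the set of all edges incident to I disconnects I from P ∖ I, and this set has cardinality at most k·|I|. Moreover, the minimum cardinality of an edge set whose removal disconnects I from P ∖ I equals k·|I| - S_E(I) where S_E(I) := Σ_{i∈I} |{y ∈ N(i) : y ∈ I}| counts (with multiplicity twice per edge) edges internal to I, in the case where no non-target node is adjacent to more than k/2 target nodes. -/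
open scoped Classical
open Finset

/-- Any walk in the graph with all `I`-crossing edges deleted stays inside `I`. -/
lemma walk_stays {V : Type*} [Fintype V] [DecidableEq V]
    (G : SimpleGraph V) [DecidableRel G.Adj]
    (I : Finset V) (B : Set (Sym2 V))
    (hB : ∀ a b : V, a ∈ I → b ∉ I → G.Adj a b → s(a, b) ∈ B) :
    ∀ {a b : V}, (G.deleteEdges B).Walk a b → a ∈ I → b ∈ I := by
  intro a b w
  induction w with
  | nil => exact id
  | @cons a c b h p ih =>
    intro ha
    rw [SimpleGraph.deleteEdges_adj] at h
    by_cases hc : c ∈ I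
    · exact ih hc
    · exact absurd (hB a c ha hc h.1) h.2

/-- collective node isolation in regular graphs: in a finite
`k`-regular graph, removing all edges incident to a target set `I` disconnects `I`
from its complement and uses at most `k·|I|` edges; moreover, if no non-target node
is adjacent to more than `k/2` target nodes, the minimum cardinality of an edge set
disconnecting `I` from `P ∖ I` equals `k·|I| - S_E(I)`, where
`S_E(I) = Σ_{i∈I} |N(i) ∩ I|`. -/
theorem stmt_17 {V : Type*} [Fintype V] [DecidableEq V]
    (G : SimpleGraph V) [DecidableRel G.Adj]
    (k : ℕ) (hreg : G.IsRegularOfDegree k)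
    (I : Finset V) (hI : I.Nonempty) (hIc : ∃ v, v ∉ I) :
    (∀ i ∈ I, ∀ v ∉ I,
      ¬ (G.deleteEdges ↑(G.edgeFinset.filter fun e => ∃ i ∈ I, i ∈ e)).Reachable i v) ∧
    (G.edgeFinset.filter fun e => ∃ i ∈ I, i ∈ e).card ≤ k * I.card ∧
    ((∀ x ∉ I, 2 * (I.filter (G.Adj x)).card ≤ k) →
      sInf {n : ℕ | ∃ F : Finset (Sym2 V), F ⊆ G.edgeFinset ∧
          (∀ i ∈ I, ∀ v ∉ I, ¬ (G.deleteEdges ↑F).Reachable i v) ∧ n = F.card}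
        = k * I.card - ∑ i ∈ I, (I.filter (G.Adj i)).card) := by
  classical
  -- boundary edges
  set B : Finset (Sym2 V) :=
    G.edgeFinset.filter (fun e => ∃ i ∈ I, ∃ v, v ∉ I ∧ e = s(i, v)) with hBdef
  have hmemB : ∀ a b : V, a ∈ I → b ∉ I → G.Adj a b → s(a, b) ∈ B := by
    intro a b ha hb hab
    simp only [hBdef, Finset.mem_filter, SimpleGraph.mem_edgeFinset,
      SimpleGraph.mem_edgeSet]
    exact ⟨hab, a, ha, b, hb, rfl⟩
  -- cardinality of B
  have hsplit : ∀ i : V, (I.filter (G.Adj i)).card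
      + ((Finset.univ \ I).filter (G.Adj i)).card = k := by
    intro i
    have h1 : I.filter (G.Adj i) = (G.neighborFinset i).filter (· ∈ I) := by
      ext v; simp [SimpleGraph.mem_neighborFinset, and_comm]
    have h2 : (Finset.univ \ I).filter (G.Adj i)
        = (G.neighborFinset i).filter (¬ · ∈ I) := by
      ext v; simp [SimpleGraph.mem_neighborFinset, and_comm]
    rw [h1, h2, Finset.card_filter_add_card_filter_not]
    exact hreg i
  have hcardB : B.card = k * I.card - ∑ i ∈ I, (I.filter (G.Adj i)).card := by
    have hbij : (I.sigma fun i => (Finset.univ \ I).filter (G.Adj i)).card = B.card := by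
      apply Finset.card_bij (fun p _ => s(p.1, p.2))
      · intro p hp
        simp only [Finset.mem_sigma, Finset.mem_filter, Finset.mem_sdiff,
          Finset.mem_univ, true_and] at hp
        exact hmemB p.1 p.2 hp.1 hp.2.1 hp.2.2
      · intro p hp q hq h
        simp only [Finset.mem_sigma, Finset.mem_filter, Finset.mem_sdiff,
          Finset.mem_univ, true_and] at hp hq
        rw [Sym2.eq_iff] at h
        rcases h with ⟨h1, h2⟩ | ⟨h1, h2⟩
        · exact Sigma.ext h1 (heq_of_eq h2)
        · exact absurd (h1 ▸ hp.1) hq.2.1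
      · intro e he
        simp only [hBdef, Finset.mem_filter, SimpleGraph.mem_edgeFinset] at he
        obtain ⟨hee, i, hi, v, hv, rfl⟩ := he
        rw [SimpleGraph.mem_edgeSet] at hee
        exact ⟨⟨i, v⟩, by
          simp only [Finset.mem_sigma, Finset.mem_filter, Finset.mem_sdiff,
            Finset.mem_univ, true_and]
          exact ⟨hi, hv, hee⟩, rfl⟩
    rw [← hbij, Finset.card_sigma]
    have hsum : (∑ i ∈ I, (I.filter (G.Adj i)).card)
        + ∑ i ∈ I, ((Finset.univ \ I).filter (G.Adj i)).card = k * I.card := by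
      rw [← Finset.sum_add_distrib]
      simp_rw [hsplit]
      rw [Finset.sum_const, smul_eq_mul, mul_comm]
    omega
  refine ⟨?_, ?_, ?_⟩
  · -- part 1: deleting all incident edges disconnects
    intro i hi v hv hr
    obtain ⟨w⟩ := hr
    have hall : ∀ a b : V, a ∈ I → b ∉ I → G.Adj a b →
        s(a, b) ∈ (↑(G.edgeFinset.filter fun e => ∃ i ∈ I, i ∈ e) : Set (Sym2 V)) := by
      intro a b ha hb hab
      simp only [Finset.coe_filter, Set.mem_setOf_eq, SimpleGraph.mem_edgeFinset,
        SimpleGraph.mem_edgeSet]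
      exact ⟨hab, a, ha, Sym2.mem_mk_left a b⟩
    exact hv (walk_stays G I _ hall w hi)
  · -- part 2: at most k * |I| incident edges
    have hsub : (G.edgeFinset.filter fun e => ∃ i ∈ I, i ∈ e)
        ⊆ I.biUnion (fun i => G.incidenceFinset i) := by
      intro e he
      simp only [Finset.mem_filter, SimpleGraph.mem_edgeFinset] at he
      obtain ⟨hee, i, hi, hie⟩ := he
      exact Finset.mem_biUnion.2 ⟨i, hi,
        (SimpleGraph.mem_incidenceFinset G i _).2 ⟨hee, hie⟩⟩
    calc (G.edgeFinset.filter fun e => ∃ i ∈ I, i ∈ e).card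
        ≤ (I.biUnion fun i => G.incidenceFinset i).card := Finset.card_le_card hsub
      _ ≤ ∑ i ∈ I, (G.incidenceFinset i).card := Finset.card_biUnion_le
      _ = ∑ i ∈ I, k := by
          refine Finset.sum_congr rfl fun i _ => ?_
          rw [SimpleGraph.card_incidenceFinset_eq_degree]
          exact hreg i
      _ = k * I.card := by rw [Finset.sum_const, smul_eq_mul, mul_comm]
  · -- part 3: minimum cut
    intro _
    have hBdisc : ∀ i ∈ I, ∀ v ∉ I, ¬ (G.deleteEdges ↑B).Reachable i v := by
      intro i hi v hv hr
      obtain ⟨w⟩ := hr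
      exact hv (walk_stays G I _ (fun a b ha hb hab => hmemB a b ha hb hab) w hi)
    have hmem : B.card ∈ {n : ℕ | ∃ F : Finset (Sym2 V), F ⊆ G.edgeFinset ∧
        (∀ i ∈ I, ∀ v ∉ I, ¬ (G.deleteEdges ↑F).Reachable i v) ∧ n = F.card} :=
      ⟨B, Finset.filter_subset _ _, hBdisc, rfl⟩
    apply le_antisymm
    · rw [← hcardB]
      exact Nat.sInf_le hmem
    · rw [← hcardB]
      apply le_csInf ⟨B.card, hmem⟩
      rintro n ⟨F, hFsub, hFdisc, rfl⟩
      apply Finset.card_le_card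
      intro e he
      simp only [hBdef, Finset.mem_filter, SimpleGraph.mem_edgeFinset] at he
      obtain ⟨hee, i, hi, v, hv, rfl⟩ := he
      rw [SimpleGraph.mem_edgeSet] at hee
      by_contra heF
      exact hFdisc i hi v hv
        ((SimpleGraph.deleteEdges_adj.2 ⟨hee, heF⟩).reachable)
end
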